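/- (Lemma 1) Let M_des ∈ ℝ^{p×ν}, M_c ∈ ℝ^{m×ν}, and G_a ∈ ℝ^{ν×p} be arbitrary, and define the augmented pair A_aug := [[A, B·M_c],[G_a·C, S − G_a·(M_des − D·M_c)]] ∈ ℝ^{(n+ν)×(n+ν)}, B_aug := [[B, 0_{n×ν}],[G_a·D, I_ν]] ∈ ℝ^{(n+ν)×(m+ν)}. Then (A_aug, B_aug) is PBH-stabilizable if and only if (A, B) is PBH-stabilizable. -/

import Mathlib

open Matrix

lemma rank_eq_card_iff_surj {a c : Type*} [Fintype a] [Fintype c] (M : Matrix a c ℂ) :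
    M.rank = Fintype.card a ↔ Function.Surjective M.mulVec := by
  constructor
  · intro h v
    have htop : LinearMap.range M.mulVecLin = ⊤ :=
      Submodule.eq_top_of_finrank_eq (by
        rw [show Module.finrank ℂ ↥(LinearMap.range M.mulVecLin) = M.rank from rfl, h,
          Module.finrank_fintype_fun_eq_card])
    obtain ⟨u, hu⟩ := LinearMap.range_eq_top.mp htop v
    exact ⟨u, hu⟩
  · intro h
    have htop : LinearMap.range M.mulVecLin = ⊤ := LinearMap.range_eq_top.mpr h
    rw [Matrix.rank, htop, finrank_top, Module.finrank_fintype_fun_eq_card]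

lemma fromColumns_mulVec' {m n₁ n₂ R : Type*} [Semiring R]
    [Fintype n₁] [Fintype n₂] (A₁ : Matrix m n₁ R) (A₂ : Matrix m n₂ R) (v : n₁ ⊕ n₂ → R) :
    fromCols A₁ A₂ *ᵥ v = A₁ *ᵥ (v ∘ Sum.inl) + A₂ *ᵥ (v ∘ Sum.inr) := by
  have h := fromCols_mulVec_sumElim A₁ A₂ (v ∘ Sum.inl) (v ∘ Sum.inr)
  rwa [Sum.elim_comp_inl_inr] at h

def PBHStabilizable {a b : Type*} [Fintype a] [DecidableEq a] [Fintype b]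
    (A : Matrix a a ℝ) (B : Matrix a b ℝ) : Prop :=
  ∀ l : ℂ, 0 ≤ l.re →
    (Matrix.fromCols (A.map Complex.ofReal - l • (1 : Matrix a a ℂ))
      (B.map Complex.ofReal)).rank = Fintype.card a


theorem augmented_stabilizable_iff (n m p ν : ℕ)
    (A : Matrix (Fin n) (Fin n) ℝ) (B : Matrix (Fin n) (Fin m) ℝ)
    (C : Matrix (Fin p) (Fin n) ℝ) (D : Matrix (Fin p) (Fin m) ℝ)
    (S : Matrix (Fin ν) (Fin ν) ℝ)
    (Mdes : Matrix (Fin p) (Fin ν) ℝ) (Mc : Matrix (Fin m) (Fin ν) ℝ)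
    (Ga : Matrix (Fin ν) (Fin p) ℝ) :
    PBHStabilizable
      (Matrix.fromBlocks A (B * Mc) (Ga * C) (S - Ga * (Mdes - D * Mc)))
      (Matrix.fromBlocks B (0 : Matrix (Fin n) (Fin ν) ℝ) (Ga * D)
        (1 : Matrix (Fin ν) (Fin ν) ℝ)) ↔
    PBHStabilizable A B := by
  unfold PBHStabilizable
  refine forall_congr' fun l => imp_congr_right fun _ => ?_
  rw [rank_eq_card_iff_surj, rank_eq_card_iff_surj]
  set P : Matrix (Fin n) (Fin n) ℂ := A.map Complex.ofReal - l • 1 with hP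
  set B' : Matrix (Fin n) (Fin m) ℂ := B.map Complex.ofReal with hB'
  set QQ : Matrix (Fin n) (Fin ν) ℂ := (B * Mc).map Complex.ofReal with hQQ
  set RR : Matrix (Fin ν) (Fin n) ℂ := (Ga * C).map Complex.ofReal with hRR
  set TT : Matrix (Fin ν) (Fin ν) ℂ :=
    (S - Ga * (Mdes - D * Mc)).map Complex.ofReal - l • 1 with hTT
  set GD : Matrix (Fin ν) (Fin m) ℂ := (Ga * D).map Complex.ofReal with hGD
  have hmul : QQ = B' * Mc.map Complex.ofReal := by
    rw [hQQ, hB']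
    ext i j
    simp [Matrix.mul_apply]
  have hmat1 : (fromBlocks A (B * Mc) (Ga * C) (S - Ga * (Mdes - D * Mc))).map
      (Complex.ofReal) - l • (1 : Matrix (Fin n ⊕ Fin ν) (Fin n ⊕ Fin ν) ℂ) =
      fromBlocks P QQ RR TT := by
    rw [fromBlocks_map, ← fromBlocks_one, fromBlocks_smul]
    ext (i | i) (j | j) <;>
      simp [fromBlocks, hP, hQQ, hRR, hTT, Matrix.one_apply]
  have hmat2 : (fromBlocks B (0 : Matrix (Fin n) (Fin ν) ℝ) (Ga * D)
      (1 : Matrix (Fin ν) (Fin ν) ℝ)).map (Complex.ofReal) =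
      fromBlocks B' 0 GD 1 := by
    rw [fromBlocks_map]
    congr 1 <;> ext i j <;> simp [Matrix.one_apply, apply_ite]
  rw [hmat1, hmat2]
  constructor
  · intro h w
    obtain ⟨v, hv⟩ := h (Sum.elim w 0)
    rw [fromColumns_mulVec', fromBlocks_mulVec, fromBlocks_mulVec] at hv
    have h1 := congrFun hv
    refine ⟨Sum.elim (v ∘ Sum.inl ∘ Sum.inl)
      (Mc.map Complex.ofReal *ᵥ (v ∘ Sum.inl ∘ Sum.inr) + v ∘ Sum.inr ∘ Sum.inl), ?_⟩
    rw [fromCols_mulVec_sumElim]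
    funext i
    have := h1 (Sum.inl i)
    simp only [Sum.elim_inl, Pi.add_apply, Pi.zero_apply, zero_mulVec, add_zero,
      Function.comp_apply] at this ⊢
    rw [mulVec_add, mulVec_mulVec, ← hmul]
    simp only [Pi.add_apply, ← Function.comp_assoc]
    linear_combination this
  · intro h w
    obtain ⟨u, hu⟩ := h (w ∘ Sum.inl)
    rw [fromColumns_mulVec'] at hu
    set x := u ∘ Sum.inl with hx
    set y := u ∘ Sum.inr with hy
    refine ⟨Sum.elim (Sum.elim x 0) (Sum.elim y
      (w ∘ Sum.inr - (RR *ᵥ x + GD *ᵥ y))), ?_⟩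
    rw [fromCols_mulVec_sumElim, fromBlocks_mulVec, fromBlocks_mulVec]
    funext i
    rcases i with i | i <;>
      simp only [Pi.add_apply, Sum.elim_inl, Sum.elim_inr, Sum.elim_comp_inl,
        Sum.elim_comp_inr, mulVec_zero, one_mulVec, Pi.sub_apply, Pi.zero_apply,
        add_zero, zero_mulVec, Function.comp_apply]
    · have h2 := congrFun hu i
      simp only [Pi.add_apply, Function.comp_apply] at h2
      linear_combination h2
    · ring
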